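/- Under the assumptions of the classifier orthogonalization setup, the Bayes posterior on the orthogonal variable satisfies P(Y=i | Z₂ = z₂(x)) = [P(Y=i) · w_x(x)_i / w₁(x)_i] / Σ_j [P(Y=j) · w_x(x)_j / w₁(x)_j]. -/

import Mathlib

/-- Classifier orthogonalization formula.
Same setup as classifier orthogonalization: at a fixed point `x`,
`p1 i = p_{Z₁|Y}(z₁(x)|i)`, `p2 i = p_{Z₂|Y}(z₂(x)|i)`, `J > 0` the shared
Jacobian volume, `π i = P(Y=i) > 0` the prior, full classifier
`wx i = P(Y=i|X=x)` and principal classifier `w1 i = P(Y=i|Z₁=z₁(x))`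
given by Bayes' rule.  Then the Bayes posterior on the orthogonal variable
satisfies
`P(Y=i|Z₂=z₂(x)) = (π i * wx i / w1 i) / Σ_j (π j * wx j / w1 j)`. -/
theorem classifier_orthogonalization {C : ℕ} (p1 p2 : Fin C → ℝ) (J : ℝ)
    (π wx w1 : Fin C → ℝ)
    (hp1 : ∀ i, 0 < p1 i) (hp2 : ∀ i, 0 < p2 i) (hJ : 0 < J)
    (hπ : ∀ i, 0 < π i)
    (hwx : ∀ i, wx i = p1 i * p2 i * J * π i / ∑ j, p1 j * p2 j * J * π j)
    (hw1 : ∀ i, w1 i = p1 i * π i / ∑ j, p1 j * π j)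
    (i : Fin C) :
    p2 i * π i / (∑ j, p2 j * π j) =
      (π i * wx i / w1 i) / ∑ j, π j * wx j / w1 j := by
  have hne : Nonempty (Fin C) := ⟨i⟩
  set S : ℝ := ∑ j, p1 j * p2 j * J * π j with hS
  set T : ℝ := ∑ j, p1 j * π j with hT
  have hSpos : 0 < S := Finset.sum_pos
    (fun j _ => mul_pos (mul_pos (mul_pos (hp1 j) (hp2 j)) hJ) (hπ j)) Finset.univ_nonempty
  have hTpos : 0 < T := Finset.sum_pos (fun j _ => mul_pos (hp1 j) (hπ j)) Finset.univ_nonempty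
  have key : ∀ k, π k * wx k / w1 k = (J * T / S) * (p2 k * π k) := by
    intro k
    rw [hwx, hw1]
    field_simp [(hπ k).ne', (hp1 k).ne', hSpos.ne', hTpos.ne']
  have hc : (J * T / S) ≠ 0 := by positivity
  rw [Finset.sum_congr rfl (fun k _ => key k), key, ← Finset.mul_sum,
    mul_div_mul_left _ _ hc]
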